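/- The subalgebra of R consisting of elements invariant both under every automorphism μ_λ (λ ∈ ℂˣ) and under the involution σ equals the ℂ-subalgebra of R generated by the five elements t₄, t₆, t₈, t₁₀, t₁₂; moreover these five elements are algebraically independent over ℂ, so this invariant subalgebra is a polynomial ring in five variables. -/

import Mathlib

open MvPolynomial

/-- The ℂ-algebra endomorphism `μ_λ` of `R = ℂ[u₁,…,u₆]` determined by
`u₁ ↦ λ²u₁, u₂ ↦ u₂, u₃ ↦ λ⁻²u₃, u₄ ↦ λ²u₄, u₅ ↦ u₅, u₆ ↦ λ⁻²u₆`. -/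
noncomputable def mu (l : ℂˣ) : MvPolynomial (Fin 6) ℂ →ₐ[ℂ] MvPolynomial (Fin 6) ℂ :=
  aeval ![C ((l : ℂ) ^ 2) * X 0, X 1, C (((l : ℂ)⁻¹) ^ 2) * X 2,
          C ((l : ℂ) ^ 2) * X 3, X 4, C (((l : ℂ)⁻¹) ^ 2) * X 5]

/-- The ℂ-algebra involution `σ` of `R` determined by `u₁ ↔ u₃, u₄ ↔ u₆, u₂ ↦ u₂, u₅ ↦ u₅`. -/
noncomputable def sigma : MvPolynomial (Fin 6) ℂ →ₐ[ℂ] MvPolynomial (Fin 6) ℂ :=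
  aeval ![X 2, X 1, X 0, X 5, X 4, X 3]

noncomputable def t4 : MvPolynomial (Fin 6) ℂ := X 1
noncomputable def t6 : MvPolynomial (Fin 6) ℂ := X 4
noncomputable def t8 : MvPolynomial (Fin 6) ℂ := X 0 * X 2
noncomputable def t10 : MvPolynomial (Fin 6) ℂ := X 0 * X 5 + X 2 * X 3
noncomputable def t12 : MvPolynomial (Fin 6) ℂ := X 3 * X 5

noncomputable def Ainv : Subalgebra ℂ (MvPolynomial (Fin 6) ℂ) :=
  Algebra.adjoin ℂ ({t4, t6, t8, t10, t12} : Set (MvPolynomial (Fin 6) ℂ))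

lemma t4_mem : t4 ∈ Ainv := Algebra.subset_adjoin (by simp)
lemma t6_mem : t6 ∈ Ainv := Algebra.subset_adjoin (by simp)
lemma t8_mem : t8 ∈ Ainv := Algebra.subset_adjoin (by simp)
lemma t10_mem : t10 ∈ Ainv := Algebra.subset_adjoin (by simp)
lemma t12_mem : t12 ∈ Ainv := Algebra.subset_adjoin (by simp)

lemma newton (n : ℕ) : ((X 0 * X 5 : MvPolynomial (Fin 6) ℂ)) ^ n + (X 2 * X 3) ^ n ∈ Ainv := by
  induction n using Nat.twoStepInduction with
  | zero => simpa using Subalgebra.add_mem _ (Subalgebra.one_mem _) (Subalgebra.one_mem _)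
  | one => simpa using (show (X 0 * X 5 + X 2 * X 3 : MvPolynomial (Fin 6) ℂ) ∈ Ainv from t10_mem)
  | more n ih1 ih2 =>
    have key : ((X 0 * X 5 : MvPolynomial (Fin 6) ℂ)) ^ (n+2) + (X 2 * X 3) ^ (n+2)
        = t10 * ((X 0 * X 5) ^ (n+1) + (X 2 * X 3) ^ (n+1))
          - t8 * t12 * ((X 0 * X 5) ^ n + (X 2 * X 3) ^ n) := by
      simp only [t10, t8, t12]; ring
    rw [key]
    exact Subalgebra.sub_mem _ (Subalgebra.mul_mem _ t10_mem ih2)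
      (Subalgebra.mul_mem _ (Subalgebra.mul_mem _ t8_mem t12_mem) ih1)

lemma keyProd (a b c d e f : ℕ) (h : a + d = c + f) :
    (X 0 ^ a * X 1 ^ b * X 2 ^ c * X 3 ^ d * X 4 ^ e * X 5 ^ f
      + X 2 ^ a * X 1 ^ b * X 0 ^ c * X 5 ^ d * X 4 ^ e * X 3 ^ f :
        MvPolynomial (Fin 6) ℂ) ∈ Ainv := by
  rcases le_or_gt c a with hca | hac
  · obtain ⟨q, rfl⟩ := Nat.exists_eq_add_of_le hca
    have hf : f = d + q := by omega
    subst hf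
    have key : (X 0 ^ (c + q) * X 1 ^ b * X 2 ^ c * X 3 ^ d * X 4 ^ e * X 5 ^ (d + q)
      + X 2 ^ (c + q) * X 1 ^ b * X 0 ^ c * X 5 ^ d * X 4 ^ e * X 3 ^ (d + q) :
        MvPolynomial (Fin 6) ℂ)
        = t4 ^ b * t6 ^ e * t8 ^ c * t12 ^ d * ((X 0 * X 5) ^ q + (X 2 * X 3) ^ q) := by
      simp only [t4, t6, t8, t12]; ring
    rw [key]
    exact Subalgebra.mul_mem _ (Subalgebra.mul_mem _ (Subalgebra.mul_mem _
      (Subalgebra.mul_mem _ (Subalgebra.pow_mem _ t4_mem b) (Subalgebra.pow_mem _ t6_mem e))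
      (Subalgebra.pow_mem _ t8_mem c)) (Subalgebra.pow_mem _ t12_mem d)) (newton q)
  · obtain ⟨r, rfl⟩ := Nat.exists_eq_add_of_le hac.le
    have hd : d = f + r := by omega
    subst hd
    have key : (X 0 ^ a * X 1 ^ b * X 2 ^ (a + r) * X 3 ^ (f + r) * X 4 ^ e * X 5 ^ f
      + X 2 ^ a * X 1 ^ b * X 0 ^ (a + r) * X 5 ^ (f + r) * X 4 ^ e * X 3 ^ f :
        MvPolynomial (Fin 6) ℂ)
        = t4 ^ b * t6 ^ e * t8 ^ a * t12 ^ f * ((X 0 * X 5) ^ r + (X 2 * X 3) ^ r) := by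
      simp only [t4, t6, t8, t12]; ring
    rw [key]
    exact Subalgebra.mul_mem _ (Subalgebra.mul_mem _ (Subalgebra.mul_mem _
      (Subalgebra.mul_mem _ (Subalgebra.pow_mem _ t4_mem b) (Subalgebra.pow_mem _ t6_mem e))
      (Subalgebra.pow_mem _ t8_mem a)) (Subalgebra.pow_mem _ t12_mem f)) (newton r)

@[simp] lemma vec6_five {α : Type*} (a b c d e f : α) : ![a,b,c,d,e,f] 5 = f := rfl

def eperm : Equiv.Perm (Fin 6) :=
  ⟨![2,1,0,5,4,3], ![2,1,0,5,4,3], by decide, by decide⟩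

lemma sigma_eq : sigma = rename ⇑eperm := by
  apply MvPolynomial.algHom_ext
  intro i
  fin_cases i <;> simp [sigma, eperm, rename_X] <;> rfl

lemma mapDomain_eperm (m : Fin 6 →₀ ℕ) (i : Fin 6) :
    (Finsupp.mapDomain ⇑eperm m) i = m (eperm i) := by
  rw [Finsupp.mapDomain_equiv_apply]
  congr 1

lemma monomial_one_eq (m : Fin 6 →₀ ℕ) :
    (monomial m 1 : MvPolynomial (Fin 6) ℂ)
      = X 0 ^ m 0 * X 1 ^ m 1 * X 2 ^ m 2 * X 3 ^ m 3 * X 4 ^ m 4 * X 5 ^ m 5 := by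
  rw [monomial_eq, Finsupp.prod_fintype]
  · rw [Fin.prod_univ_six]; simp [mul_assoc]
  · intro i; exact pow_zero _

lemma keyMono (m : Fin 6 →₀ ℕ) (h : m 0 + m 3 = m 2 + m 5) :
    (monomial m 1 + monomial (Finsupp.mapDomain ⇑eperm m) 1 : MvPolynomial (Fin 6) ℂ) ∈ Ainv := by
  have h2 := keyProd (m 0) (m 1) (m 2) (m 3) (m 4) (m 5) h
  rw [monomial_one_eq, monomial_one_eq]
  simp only [mapDomain_eperm]
  rw [show eperm 0 = 2 from rfl, show eperm 1 = 1 from rfl, show eperm 2 = 0 from rfl,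
    show eperm 3 = 5 from rfl, show eperm 4 = 4 from rfl, show eperm 5 = 3 from rfl]
  convert h2 using 1
  ring

lemma mu_monomial (l : ℂˣ) (m : Fin 6 →₀ ℕ) (c : ℂ) :
    mu l (monomial m c)
      = monomial m ((((l:ℂ)) ^ 2) ^ (m 0 + m 3) * (((l:ℂ)⁻¹) ^ 2) ^ (m 2 + m 5) * c) := by
  rw [mu, aeval_monomial, Finsupp.prod_fintype _ _ (fun i => pow_zero _), Fin.prod_univ_six]
  rw [monomial_eq, Finsupp.prod_fintype _ _ (fun i => pow_zero _), Fin.prod_univ_six]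
  rw [show (5 : Fin 6) = Fin.succ 4 from rfl, Matrix.cons_val_succ]
  simp only [Matrix.cons_val_zero, Matrix.cons_val_one, Matrix.head_cons, Matrix.cons_val_two,
    Matrix.tail_cons, Matrix.cons_val_three, Matrix.cons_val_four, Matrix.cons_val_succ,
    algebraMap_eq, map_mul, pow_add, C_pow, mul_pow]
  ring

lemma coeff_mu (l : ℂˣ) (f : MvPolynomial (Fin 6) ℂ) (m : Fin 6 →₀ ℕ) :
    coeff m (mu l f)
      = (((l:ℂ)) ^ 2) ^ (m 0 + m 3) * (((l:ℂ)⁻¹) ^ 2) ^ (m 2 + m 5) * coeff m f := by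
  induction f using MvPolynomial.induction_on' with
  | monomial m' c =>
    rw [mu_monomial, coeff_monomial, coeff_monomial]
    split
    · next h => subst h; rfl
    · ring
  | add p q hp hq => rw [map_add, coeff_add, coeff_add, hp, hq]; ring

lemma weight_zero (f : MvPolynomial (Fin 6) ℂ) (hf : ∀ l : ℂˣ, mu l f = f) :
    ∀ m ∈ f.support, m 0 + m 3 = m 2 + m 5 := by
  intro m hm
  set l₀ : ℂˣ := Units.mk0 (2:ℂ) (by norm_num) with hl₀
  have h := congrArg (coeff m) (hf l₀)
  rw [coeff_mu] at h
  have hl : ((l₀ : ℂ)) = 2 := rfl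
  rw [hl] at h
  have hc : coeff m f ≠ 0 := mem_support_iff.mp hm
  have hs : ((2:ℂ)^2)^(m 0 + m 3) * (((2:ℂ)⁻¹)^2)^(m 2 + m 5) = 1 :=
    mul_right_cancel₀ hc (h.trans (one_mul (coeff m f)).symm)
  have hne : (((2:ℂ))^2)^(m 2 + m 5) ≠ 0 := pow_ne_zero _ (by norm_num)
  have hss : ((2:ℂ)^2)^(m 0 + m 3) = ((2:ℂ)^2)^(m 2 + m 5) := by
    rw [inv_pow, inv_pow, ← inv_pow] at hs
    rw [inv_pow] at hs
    exact (mul_inv_eq_one₀ hne).mp hs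
  have hnat : (2:ℕ)^(2*(m 0 + m 3)) = 2^(2*(m 2 + m 5)) := by
    have : ((2:ℂ))^(2*(m 0 + m 3)) = (2:ℂ)^(2*(m 2 + m 5)) := by
      rw [pow_mul, pow_mul]; exact hss
    exact_mod_cast this
  have := Nat.pow_right_injective (le_refl 2) hnat
  omega

/-- The subalgebra of elements invariant under all `μ_λ` and under `σ` is the
ℂ-subalgebra generated by `t₄, t₆, t₈, t₁₀, t₁₂`, and these five elements are
algebraically independent over ℂ. -/
theorem invariants_mu_sigma_eq_adjoin_and_algIndep :
    (∀ f : MvPolynomial (Fin 6) ℂ,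
      ((∀ l : ℂˣ, mu l f = f) ∧ sigma f = f) ↔
        f ∈ Algebra.adjoin ℂ ({t4, t6, t8, t10, t12} : Set (MvPolynomial (Fin 6) ℂ))) ∧
    AlgebraicIndependent ℂ ![t4, t6, t8, t10, t12] := by
  constructor
  · intro f
    constructor
    · rintro ⟨hmu, hsig⟩
      have hw := weight_zero f hmu
      show f ∈ Ainv
      have hcoeff : ∀ m : Fin 6 →₀ ℕ, coeff (Finsupp.mapDomain ⇑eperm m) f = coeff m f := by
        intro m
        conv_lhs => rw [← hsig, sigma_eq]
        exact coeff_rename_mapDomain _ eperm.injective f m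
      have hsum : sigma f
          = ∑ m ∈ f.support, monomial (Finsupp.mapDomain ⇑eperm m) (coeff m f) := by
        conv_lhs => rw [f.as_sum]
        rw [map_sum]
        simp only [sigma_eq, rename_monomial]
      have h2f : f + sigma f = ∑ m ∈ f.support,
          (monomial m (coeff m f) + monomial (Finsupp.mapDomain ⇑eperm m) (coeff m f)) := by
        rw [Finset.sum_add_distrib, ← hsum]
        congr 1
        exact f.as_sum
      have hmem : f + sigma f ∈ Ainv := by
        rw [h2f]
        refine Subalgebra.sum_mem _ fun m hm => ?_
        have hterm : monomial m (coeff m f) + monomial (Finsupp.mapDomain ⇑eperm m) (coeff m f)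
            = C (coeff m f) * (monomial m 1 + monomial (Finsupp.mapDomain ⇑eperm m) 1) := by
          rw [mul_add, C_mul_monomial, C_mul_monomial, mul_one]
        rw [hterm]
        refine Subalgebra.mul_mem _ ?_ (keyMono m (hw m hm))
        rw [← algebraMap_eq]
        exact Subalgebra.algebraMap_mem _ _
      have hf2 : f = (2⁻¹ : ℂ) • (f + sigma f) := by
        rw [hsig, ← two_smul ℂ f, smul_smul]
        norm_num
      rw [hf2]
      exact Subalgebra.smul_mem _ hmem _
    · intro hf
      have hl : ∀ l : ℂˣ, ((l:ℂ))^2 * (((l:ℂ))⁻¹)^2 = 1 := by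
        intro l
        have : (l:ℂ) ≠ 0 := Units.ne_zero l
        field_simp
      have hC : ∀ l : ℂˣ, (C ((l:ℂ)^2) * C (((l:ℂ)⁻¹)^2) : MvPolynomial (Fin 6) ℂ) = 1 := by
        intro l; rw [← C_mul, hl, C_1]
      refine Algebra.adjoin_induction (fun x hx => ?_) (fun r => ?_) (fun x y _ _ hx hy => ?_)
        (fun x y _ _ hx hy => ?_) hf
      · simp only [Set.mem_insert_iff, Set.mem_singleton_iff] at hx
        rcases hx with rfl | rfl | rfl | rfl | rfl
        · exact ⟨fun l => by simp [mu, t4], by simp [sigma, t4]⟩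
        · exact ⟨fun l => by simp [mu, t6], by simp [sigma, t6]⟩
        · refine ⟨fun l => ?_, ?_⟩
          · rw [show mu l t8 = (C ((l:ℂ)^2) * X 0) * (C (((l:ℂ)⁻¹)^2) * X 2) from by
              simp [mu, t8]]
            rw [t8]
            linear_combination (X 0 * X 2 : MvPolynomial (Fin 6) ℂ) * hC l
          · rw [show sigma t8 = X 2 * X 0 from by simp [sigma, t8]]
            rw [t8]; ring
        · refine ⟨fun l => ?_, ?_⟩
          · rw [show mu l t10 = (C ((l:ℂ)^2) * X 0) * (C (((l:ℂ)⁻¹)^2) * X 5)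
                + (C (((l:ℂ)⁻¹)^2) * X 2) * (C ((l:ℂ)^2) * X 3) from by simp [mu, t10]]
            rw [t10]
            linear_combination (X 0 * X 5 + X 2 * X 3 : MvPolynomial (Fin 6) ℂ) * hC l
          · rw [show sigma t10 = X 2 * X 3 + X 0 * X 5 from by simp [sigma, t10]]
            rw [t10]; ring
        · refine ⟨fun l => ?_, ?_⟩
          · rw [show mu l t12 = (C ((l:ℂ)^2) * X 3) * (C (((l:ℂ)⁻¹)^2) * X 5) from by
              simp [mu, t12]]
            rw [t12]
            linear_combination (X 3 * X 5 : MvPolynomial (Fin 6) ℂ) * hC l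
          · rw [show sigma t12 = X 5 * X 3 from by simp [sigma, t12]]
            rw [t12]; ring
      · exact ⟨fun l => (mu l).commutes r, sigma.commutes r⟩
      · exact ⟨fun l => by rw [map_add, hx.1 l, hy.1 l], by rw [map_add, hx.2, hy.2]⟩
      · exact ⟨fun l => by rw [map_mul, hx.1 l, hy.1 l], by rw [map_mul, hx.2, hy.2]⟩
  · rw [algebraicIndependent_iff]
    intro p hp
    have key : ∀ y : Fin 5 → ℂ, eval y p = 0 := by
      intro y
      have main : ∀ u : Fin 6 → ℂ,
          (fun i => (aeval u : MvPolynomial (Fin 6) ℂ →ₐ[ℂ] ℂ) (![t4,t6,t8,t10,t12] i)) = y →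
          eval y p = 0 := by
        intro u hu
        have h := congrArg (aeval u : MvPolynomial (Fin 6) ℂ →ₐ[ℂ] ℂ) hp
        rw [map_zero, comp_aeval_apply, hu] at h
        rw [← coe_aeval_eq_eval]
        exact h
      rcases eq_or_ne (y 2) 0 with h2 | h2
      · rcases eq_or_ne (y 4) 0 with h4 | h4
        · refine main ![0, y 0, y 3, 1, y 1, 0] ?_
          funext i
          fin_cases i <;>
            simp [t4, t6, t8, t10, t12, h2, h4]
        · refine main ![0, y 0, y 3 / y 4, y 4, y 1, 1] ?_
          funext i
          fin_cases i <;>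
            simp [t4, t6, t8, t10, t12, h2] <;>
            field_simp
      · obtain ⟨s, hs⟩ := IsAlgClosed.exists_pow_nat_eq (k := ℂ)
          (y 3 ^ 2 - 4 * y 2 * y 4) (n := 2) (by norm_num)
        refine main ![y 2, y 0, 1, (y 3 - s)/2, y 1, (y 3 + s)/(2 * y 2)] ?_
        funext i
        fin_cases i
        · show _ = y 0; simp [t4]
        · show _ = y 1; simp [t6]
        · show _ = y 2; simp [t8]
        · show _ = y 3
          simp [t10]
          field_simp
          first
            | linear_combination hs
            | linear_combination -hs
            | linear_combination (-2:ℂ) * hs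
            | linear_combination (2:ℂ) * hs
            | ring
        · show _ = y 4
          simp [t12]
          field_simp
          first
            | linear_combination hs
            | linear_combination -hs
            | linear_combination (-2:ℂ) * hs
            | linear_combination (2:ℂ) * hs
            | ring
    exact MvPolynomial.funext fun x => by rw [key x, map_zero]
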